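/- For all integers d ≥ 3 and n ≥ 4 with d even, the domination number of the directed 3-constrained de Bruijn graph satisfies γ(cDB⁺(d,3,n)) = d · (d−2)^{n−2}. -/

import Mathlib

/-- A sequence `x` of length `n` over the alphabet `Fin d` is `t`-constrained if
equal symbols occur at positions at distance at least `t`. -/
def dbConstrained (d t n : ℕ) (x : Fin n → Fin d) : Prop :=
  ∀ i j : Fin n, i < j → x i = x j → t ≤ (j : ℕ) - (i : ℕ)

/-- The vertex set `V(d,t,n)` of the `t`-constrained de Bruijn graph: all
`t`-constrained sequences of length `n` over a `d`-letter alphabet. -/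
abbrev dbVtx (d t n : ℕ) : Type := {x : Fin n → Fin d // dbConstrained d t n x}

/-- `dbShift x y` holds when there is a directed de Bruijn edge from `x` to `y`,
i.e. `y` is obtained from `x` by deleting its first symbol and appending a new
last symbol. -/
def dbShift {d t n : ℕ} (x y : dbVtx d t n) : Prop :=
  ∀ (i : Fin n) (h : (i : ℕ) + 1 < n), y.val i = x.val ⟨(i : ℕ) + 1, h⟩

/-- `S` is a dominating set of the directed `t`-constrained de Bruijn graph
`cDB⁺(d,t,n)`: every vertex is dominated by (equal to, or an out-neighbor of)
some element of `S`. -/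
def dbDirDominating {d t n : ℕ} (S : Set (dbVtx d t n)) : Prop :=
  ∀ v : dbVtx d t n, ∃ s ∈ S, s = v ∨ dbShift s v

/-- The domination number `γ(cDB⁺(d,t,n))` of the directed `t`-constrained
de Bruijn graph. -/
noncomputable def gammaDir (d t n : ℕ) : ℕ :=
  sInf {k | ∃ S : Set (dbVtx d t n), S.Finite ∧ S.ncard = k ∧ dbDirDominating S}

/-- Adjacency in the undirected `t`-constrained de Bruijn graph `cDB(d,t,n)`:
edge directions are ignored and loops are removed. -/
def dbAdj {d t n : ℕ} (x y : dbVtx d t n) : Prop :=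
  x ≠ y ∧ (dbShift x y ∨ dbShift y x)

/-- `S` is a dominating set of the undirected graph `cDB(d,t,n)`: every vertex
is dominated by (equal to, or adjacent to) some element of `S`. -/
def dbUndirDominating {d t n : ℕ} (S : Set (dbVtx d t n)) : Prop :=
  ∀ v : dbVtx d t n, ∃ s ∈ S, s = v ∨ dbAdj s v

/-- The domination number `γ(cDB(d,t,n))` of the undirected `t`-constrained
de Bruijn graph. -/
noncomputable def gammaUndir (d t n : ℕ) : ℕ :=
  sInf {k | ∃ S : Set (dbVtx d t n), S.Finite ∧ S.ncard = k ∧ dbUndirDominating S}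

-- Fin helpers
lemma fin_snoc_lt {α : Type*} {k : ℕ} (y : Fin k → α) (a : α) (i : Fin (k+1)) (h : i.val < k) :
    (Fin.snoc y a : Fin (k+1) → α) i = y ⟨i.val, h⟩ := by
  have h2 : (Fin.snoc y a : Fin (k+1) → α) (Fin.castSucc ⟨i.val, h⟩) = y ⟨i.val, h⟩ :=
    Fin.snoc_castSucc ..
  convert h2 using 2
  exact Fin.ext rfl

lemma fin_snoc_eq {α : Type*} {k : ℕ} (y : Fin k → α) (a : α) (i : Fin (k+1)) (h : i.val = k) :
    (Fin.snoc y a : Fin (k+1) → α) i = a := by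
  have hi : i = Fin.last k := by ext; exact h
  rw [hi, Fin.snoc_last]

lemma fin_cons_succ' {α : Type*} {k : ℕ} (b : α) (g : Fin k → α) (i : Fin (k+1)) (t : ℕ)
    (h : i.val = t+1) (ht : t < k) : (Fin.cons b g : Fin (k+1) → α) i = g ⟨t, ht⟩ := by
  have hi : i = Fin.succ ⟨t, ht⟩ := by ext; simpa using h
  rw [hi, Fin.cons_succ]

lemma fin_cons_zero' {α : Type*} {k : ℕ} (b : α) (g : Fin k → α) (i : Fin (k+1)) (h : i.val = 0) :
    (Fin.cons b g : Fin (k+1) → α) i = b := by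
  have hi : i = 0 := by ext; simpa using h
  rw [hi, Fin.cons_zero]

lemma fin_init_val {α : Type*} {k : ℕ} (x : Fin (k+1) → α) (i : Fin k) :
    Fin.init x i = x ⟨i.val, by omega⟩ := by
  have h2 : Fin.castSucc i = ⟨i.val, by omega⟩ := by ext; rfl
  rw [Fin.init, h2]

lemma constrained_last_ne {d m : ℕ} {y : Fin (m+2) → Fin d} (hy : dbConstrained d 3 (m+2) y) :
    y ⟨m+1, by omega⟩ ≠ y ⟨m, by omega⟩ := by
  intro h
  have := hy ⟨m, by omega⟩ ⟨m+1, by omega⟩ (Fin.mk_lt_mk.mpr (by omega)) h.symm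
  simp at this

lemma constrained_last_ne2 {d m : ℕ} {y : Fin (m+2) → Fin d} (hy : dbConstrained d 3 (m+2) y)
    (hm : 1 ≤ m) : y ⟨m+1, by omega⟩ ≠ y ⟨m-1, by omega⟩ := by
  intro h
  have := hy ⟨m-1, by omega⟩ ⟨m+1, by omega⟩ (Fin.mk_lt_mk.mpr (by omega)) h.symm
  simp at this; omega

lemma constrained_snoc {d m : ℕ} (y : Fin (m+2) → Fin d) (a : Fin d) :
    dbConstrained d 3 (m+3) (Fin.snoc y a) ↔
      dbConstrained d 3 (m+2) y ∧ a ≠ y ⟨m+1, by omega⟩ ∧ a ≠ y ⟨m, by omega⟩ := by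
  constructor
  · intro H
    refine ⟨?_, ?_, ?_⟩
    · intro i j hij hval
      have := H ⟨i.val, by omega⟩ ⟨j.val, by omega⟩ (Fin.mk_lt_mk.mpr hij)
        (by rw [fin_snoc_lt y a _ (show i.val < m+2 from i.isLt),
                fin_snoc_lt y a _ (show j.val < m+2 from j.isLt)]
            exact hval)
      exact this
    · intro hcon
      have := H ⟨m+1, by omega⟩ ⟨m+2, by omega⟩ (Fin.mk_lt_mk.mpr (by omega))
        (by rw [fin_snoc_lt y a _ (show m+1 < m+2 by omega), fin_snoc_eq y a _ rfl]
            exact hcon.symm)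
      simp at this
    · intro hcon
      have := H ⟨m, by omega⟩ ⟨m+2, by omega⟩ (Fin.mk_lt_mk.mpr (by omega))
        (by rw [fin_snoc_lt y a _ (show m < m+2 by omega), fin_snoc_eq y a _ rfl]
            exact hcon.symm)
      simp at this
  · rintro ⟨Hy, ha1, ha2⟩ i j hij hval
    have hijv : i.val < j.val := hij
    by_cases hj : j.val < m+2
    · have hi : i.val < m+2 := by omega
      rw [fin_snoc_lt y a i hi, fin_snoc_lt y a j hj] at hval
      exact Hy ⟨i.val, hi⟩ ⟨j.val, hj⟩ (Fin.mk_lt_mk.mpr hijv) hval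
    · have hj2 : j.val = m+2 := by have := j.isLt; omega
      have hi : i.val < m+2 := by omega
      rw [fin_snoc_eq y a j hj2, fin_snoc_lt y a i hi] at hval
      have hi' : i.val < m := by
        by_contra hcon
        have hc2 : i.val = m ∨ i.val = m+1 := by omega
        rcases hc2 with h | h
        · apply ha2
          rw [← hval]; congr 1; ext; simp [h]
        · apply ha1
          rw [← hval]; congr 1; ext; simp [h]
      show 3 ≤ j.val - i.val
      omega

lemma constrained_cons {d m : ℕ} (x : Fin (m+2) → Fin d)
    (hx : dbConstrained d 3 (m+2) x) (b : Fin d)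
    (h0 : b ≠ x 0) (h1 : b ≠ x 1) :
    dbConstrained d 3 (m+2) (Fin.cons b (Fin.init x)) := by
  intro i j hij hval
  have hjlt : j.val < m+2 := j.isLt
  have hijv : i.val < j.val := hij
  rcases Nat.eq_zero_or_pos i.val with hi0 | hipos
  · rw [fin_cons_zero' _ _ i hi0,
      fin_cons_succ' b (Fin.init x) j (j.val - 1) (by omega) (by omega), fin_init_val] at hval
    show 3 ≤ j.val - i.val
    by_contra hlt
    have hc : j.val = 1 ∨ j.val = 2 := by omega
    rcases hc with h | h
    · apply h0
      rw [hval]; congr 1; ext; simp [h]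
    · apply h1
      rw [hval]; congr 1; ext; simp [h, Fin.val_one]
  · rw [fin_cons_succ' b _ i (i.val - 1) (by omega) (by omega), fin_init_val,
      fin_cons_succ' b _ j (j.val - 1) (by omega) (by omega), fin_init_val] at hval
    have := hx ⟨i.val - 1, by omega⟩ ⟨j.val - 1, by omega⟩ (Fin.mk_lt_mk.mpr (by omega)) hval
    simp only [] at this
    show 3 ≤ j.val - i.val
    omega
lemma fin_init_zero {α : Type*} {k : ℕ} (x : Fin (k+3) → α) :
    Fin.init x 0 = x 0 :=
  (fin_init_val x 0).trans (by congr 1)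

lemma fin_init_one {α : Type*} {k : ℕ} (x : Fin (k+3) → α) :
    Fin.init x 1 = x 1 :=
  (fin_init_val x 1).trans (by congr 1)

lemma fin_snoc_zero {α : Type*} {k : ℕ} (y : Fin (k+2) → α) (a : α) :
    (Fin.snoc y a : Fin (k+3) → α) 0 = y 0 :=
  (fin_snoc_lt y a 0 (by simp)).trans (by congr 1)

lemma fin_snoc_one {α : Type*} {k : ℕ} (y : Fin (k+2) → α) (a : α) :
    (Fin.snoc y a : Fin (k+3) → α) 1 = y 1 :=
  (fin_snoc_lt y a 1 (by simp)).trans (by congr 1)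
lemma card_ne_pair {d : ℕ} (u v : Fin d) (huv : u ≠ v) :
    Nat.card {a : Fin d // a ≠ u ∧ a ≠ v} = d - 2 := by
  classical
  rw [Nat.card_eq_fintype_card, Fintype.card_subtype]
  have h1 : (Finset.univ.filter fun a : Fin d => a ≠ u ∧ a ≠ v) = Finset.univ \ {u, v} := by
    ext a
    simp [not_or]
  rw [h1, Finset.card_sdiff_of_subset (Finset.subset_univ _), Finset.card_pair huv, Finset.card_univ,
    Fintype.card_fin]

def dbSnocMap {d m : ℕ} (B : Finset (Fin d × Fin d))
    (ya : Σ y : {y : Fin (m+2) → Fin d // dbConstrained d 3 (m+2) y ∧ (y 0, y 1) ∈ B},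
      {a : Fin d // a ≠ y.1 ⟨m+1, by omega⟩ ∧ a ≠ y.1 ⟨m, by omega⟩}) :
    {x : Fin (m+3) → Fin d // dbConstrained d 3 (m+3) x ∧ (x 0, x 1) ∈ B} :=
  ⟨Fin.snoc ya.1.1 ya.2.1, (constrained_snoc ya.1.1 ya.2.1).mpr ⟨ya.1.2.1, ya.2.2.1, ya.2.2.2⟩,
    by rw [fin_snoc_zero, fin_snoc_one]; exact ya.1.2.2⟩

lemma count_aux {d : ℕ} (hd : 3 ≤ d) :
    ∀ (m : ℕ) (B : Finset (Fin d × Fin d)), (∀ p ∈ B, p.1 ≠ p.2) →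
    Nat.card {x : Fin (m+2) → Fin d // dbConstrained d 3 (m+2) x ∧ (x 0, x 1) ∈ B}
      = B.card * (d-2)^m := by
  intro m
  induction m with
  | zero =>
    intro B hB
    have e : {x : Fin 2 → Fin d // dbConstrained d 3 2 x ∧ (x 0, x 1) ∈ B}
        ≃ {p : Fin d × Fin d // p ∈ B} :=
      { toFun := fun x => ⟨(x.1 0, x.1 1), x.2.2⟩
        invFun := fun p => ⟨![p.1.1, p.1.2], by
          constructor
          · intro i j hij hval
            exfalso
            have h1 : i.val = 0 ∧ j.val = 1 := by
              have := i.isLt; have := j.isLt; have : i.val < j.val := hij; omega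
            have hi : i = 0 := by ext; simp [h1.1]
            have hj : j = 1 := by ext; simp [h1.2]
            rw [hi, hj] at hval
            simp at hval
            exact hB p.1 p.2 hval
          · simpa using p.2⟩
        left_inv := fun x => by
          apply Subtype.ext
          funext i
          fin_cases i <;> simp
        right_inv := fun p => by
          apply Subtype.ext
          simp }
    rw [Nat.card_congr e, Nat.card_eq_fintype_card, Fintype.card_coe]
    simp
  | succ m ih =>
    intro B hB
    classical
    set T := {y : Fin (m+2) → Fin d // dbConstrained d 3 (m+2) y ∧ (y 0, y 1) ∈ B} with hT
    have hfbij : Function.Bijective (dbSnocMap (m := m) B) := by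
      constructor
      · rintro ⟨⟨y, hy⟩, ⟨a, ha⟩⟩ ⟨⟨y', hy'⟩, ⟨a', ha'⟩⟩ h
        have h' : (Fin.snoc y a : Fin (m+3) → Fin d) = Fin.snoc y' a' :=
          congrArg Subtype.val h
        have hyy : y = y' := by
          funext z
          have h2 := congrFun h' (Fin.castSucc z)
          rwa [Fin.snoc_castSucc, Fin.snoc_castSucc] at h2
        subst hyy
        have haa : a = a' := by
          have h2 := congrFun h' (Fin.last (m+2))
          rwa [Fin.snoc_last, Fin.snoc_last] at h2
        subst haa
        rfl
      · rintro ⟨x, hx, hmem⟩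
        have hsn : dbConstrained d 3 (m+2) (Fin.init x) ∧
            x (Fin.last (m+2)) ≠ Fin.init x ⟨m+1, by omega⟩ ∧
            x (Fin.last (m+2)) ≠ Fin.init x ⟨m, by omega⟩ :=
          (constrained_snoc (Fin.init x) (x (Fin.last (m+2)))).mp
            (by rw [Fin.snoc_init_self]; exact hx)
        refine ⟨⟨⟨Fin.init x, hsn.1, ?_⟩, ⟨x (Fin.last (m+2)), hsn.2.1, hsn.2.2⟩⟩, ?_⟩
        · rw [fin_init_zero, fin_init_one]
          exact hmem
        · apply Subtype.ext
          exact Fin.snoc_init_self x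
    have e := Equiv.ofBijective _ hfbij
    rw [← Nat.card_congr e]
    rw [Nat.card_eq_fintype_card, Fintype.card_sigma]
    have hcard : ∀ y : T,
        Fintype.card {a : Fin d // a ≠ y.1 ⟨m+1, by omega⟩ ∧ a ≠ y.1 ⟨m, by omega⟩} = d - 2 := by
      intro y
      rw [← Nat.card_eq_fintype_card]
      exact card_ne_pair _ _ (constrained_last_ne y.2.1)
    calc (∑ y : T,
            Fintype.card {a : Fin d // a ≠ y.1 ⟨m+1, by omega⟩ ∧ a ≠ y.1 ⟨m, by omega⟩})
        = ∑ _y : T, (d-2) := Finset.sum_congr rfl (fun y _ => hcard y)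
      _ = Fintype.card T * (d-2) := by
          rw [Finset.sum_const, Finset.card_univ, smul_eq_mul]
      _ = B.card * (d-2)^(m+1) := by
          rw [← Nat.card_eq_fintype_card, hT, ih B hB, pow_succ, mul_assoc]
def dbSig {d : ℕ} (a : Fin d) : Fin d :=
  if a.val % 2 = 0 then ⟨(a.val + 1) % d, Nat.mod_lt _ a.pos⟩
  else ⟨a.val - 1, by have := a.isLt; omega⟩

lemma dbSig_val_even {d : ℕ} (hd2 : d % 2 = 0) (a : Fin d) (h : a.val % 2 = 0) :
    (dbSig a).val = a.val + 1 := by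
  rw [dbSig, if_pos h]
  apply Nat.mod_eq_of_lt
  have := a.isLt; omega

lemma dbSig_val_odd {d : ℕ} (a : Fin d) (h : a.val % 2 = 1) :
    (dbSig a).val = a.val - 1 := by
  rw [dbSig, if_neg (by omega)]

lemma dbSig_ne {d : ℕ} (hd2 : d % 2 = 0) (a : Fin d) : dbSig a ≠ a := by
  intro h
  have hv := congrArg Fin.val h
  rcases Nat.mod_two_eq_zero_or_one a.val with h2 | h2
  · rw [dbSig_val_even hd2 a h2] at hv; omega
  · rw [dbSig_val_odd a h2] at hv; omega

lemma dbSig_invol {d : ℕ} (hd2 : d % 2 = 0) (a : Fin d) : dbSig (dbSig a) = a := by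
  apply Fin.ext
  rcases Nat.mod_two_eq_zero_or_one a.val with h2 | h2
  · have h3 := dbSig_val_even hd2 a h2
    have h4 : (dbSig a).val % 2 = 1 := by omega
    rw [dbSig_val_odd _ h4, h3]
    omega
  · have h5 := a.isLt
    have h3 := dbSig_val_odd a h2
    have h4 : (dbSig a).val % 2 = 0 := by omega
    rw [dbSig_val_even hd2 _ h4, h3]
    omega
lemma card_V {d m : ℕ} (hd : 3 ≤ d) :
    Nat.card (dbVtx d 3 (m+2)) = d * (d-1) * (d-2)^m := by
  classical
  have hBfull : ∀ p ∈ (Finset.univ.filter fun p : Fin d × Fin d => p.1 ≠ p.2), p.1 ≠ p.2 :=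
    fun p hp => (Finset.mem_filter.mp hp).2
  have hiff : ∀ x : Fin (m+2) → Fin d, dbConstrained d 3 (m+2) x ↔
      (dbConstrained d 3 (m+2) x ∧
        (x 0, x 1) ∈ Finset.univ.filter fun p : Fin d × Fin d => p.1 ≠ p.2) := by
    intro x
    constructor
    · intro hx
      refine ⟨hx, Finset.mem_filter.mpr ⟨Finset.mem_univ _, ?_⟩⟩
      intro heq
      have h0 : (0 : Fin (m+2)) < 1 := by simp [Fin.lt_def]
      have := hx 0 1 h0 heq
      simp at this
    · exact fun h => h.1
  rw [Nat.card_congr (Equiv.subtypeEquivRight hiff), count_aux hd m _ hBfull]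
  congr 1
  have hdiag : (Finset.univ.filter fun p : Fin d × Fin d => p.1 = p.2)
      = Finset.univ.image (fun a : Fin d => (a,a)) := by
    ext ⟨p1, p2⟩
    simp only [Finset.mem_filter, Finset.mem_univ, true_and, Finset.mem_image, Prod.mk.injEq]
    constructor
    · intro h; exact ⟨p1, rfl, h⟩
    · rintro ⟨a, rfl, rfl⟩; rfl
  have h1 : (Finset.univ.filter fun p : Fin d × Fin d => p.1 = p.2).card = d := by
    rw [hdiag, Finset.card_image_of_injective _ (fun a b h => congrArg Prod.fst h),
      Finset.card_univ, Fintype.card_fin]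
  have h2 := Finset.card_filter_add_card_filter_not
    (s := (Finset.univ : Finset (Fin d × Fin d))) (p := fun p => p.1 = p.2)
  rw [Finset.card_univ, Fintype.card_prod, Fintype.card_fin, h1] at h2
  have harith : d * (d - 1) + d = d * d := by
    obtain ⟨c, rfl⟩ : ∃ c, d = c + 3 := ⟨d - 3, by omega⟩
    have hc : c + 3 - 1 = c + 2 := rfl
    rw [hc]; ring
  simp only [ne_eq] at h2 ⊢
  omega

lemma card_S {d m : ℕ} (hd : 3 ≤ d) (hd2 : d % 2 = 0) :
    Nat.card {x : Fin (m+2) → Fin d // dbConstrained d 3 (m+2) x ∧ x 1 = dbSig (x 0)}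
      = d * (d-2)^m := by
  classical
  have hB : ∀ p ∈ (Finset.univ.image (fun a : Fin d => (a, dbSig a))), p.1 ≠ p.2 := by
    intro p hp
    obtain ⟨a, -, rfl⟩ := Finset.mem_image.mp hp
    exact (dbSig_ne hd2 a).symm
  have hiff : ∀ x : Fin (m+2) → Fin d,
      (dbConstrained d 3 (m+2) x ∧ x 1 = dbSig (x 0)) ↔
      (dbConstrained d 3 (m+2) x ∧
        (x 0, x 1) ∈ Finset.univ.image (fun a : Fin d => (a, dbSig a))) := by
    intro x
    apply and_congr_right
    intro _
    rw [Finset.mem_image]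
    constructor
    · intro h; exact ⟨x 0, Finset.mem_univ _, by rw [h]⟩
    · rintro ⟨a, -, ha⟩
      have h1 : a = x 0 := congrArg Prod.fst ha
      have h2 : dbSig a = x 1 := congrArg Prod.snd ha
      rw [← h1]
      exact h2.symm
  rw [Nat.card_congr (Equiv.subtypeEquivRight hiff), count_aux hd m _ hB,
    Finset.card_image_of_injective _ (fun a b h => congrArg Prod.fst h),
    Finset.card_univ, Fintype.card_fin]
lemma dom_S {d m : ℕ} (hd2 : d % 2 = 0) :
    dbDirDominating {v : dbVtx d 3 (m+2) | v.1 1 = dbSig (v.1 0)} := by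
  rintro ⟨x, hx⟩
  by_cases hc : x 1 = dbSig (x 0)
  · exact ⟨⟨x, hx⟩, hc, Or.inl rfl⟩
  · have hb0 : dbSig (x 0) ≠ x 0 := dbSig_ne hd2 (x 0)
    have hb1 : dbSig (x 0) ≠ x 1 := fun h => hc h.symm
    refine ⟨⟨Fin.cons (dbSig (x 0)) (Fin.init x), constrained_cons x hx _ hb0 hb1⟩, ?_, Or.inr ?_⟩
    · show (Fin.cons (dbSig (x 0)) (Fin.init x) : Fin (m+2) → Fin d) 1
        = dbSig ((Fin.cons (dbSig (x 0)) (Fin.init x) : Fin (m+2) → Fin d) 0)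
      rw [fin_cons_zero' _ _ 0 (by simp), fin_cons_succ' _ _ 1 0 (by simp) (by omega),
        fin_init_val, dbSig_invol hd2]
      try congr 1
    · intro i hi
      show x i = (Fin.cons (dbSig (x 0)) (Fin.init x) : Fin (m+2) → Fin d) ⟨i.val + 1, hi⟩
      rw [fin_cons_succ' _ _ _ i.val rfl (by omega), fin_init_val]
      try congr 1

open Classical in
lemma nbhd_card {d m : ℕ} (hd : 3 ≤ d) (hm : 2 ≤ m) (s : dbVtx d 3 (m+2)) :
    (Finset.univ.filter (fun v : dbVtx d 3 (m+2) => s = v ∨ dbShift s v)).card ≤ d - 1 := by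
  classical
  have hu : s.1 ⟨m+1, by omega⟩ ≠ s.1 ⟨m, by omega⟩ := constrained_last_ne s.2
  have key : ∀ v : dbVtx d 3 (m+2), dbShift s v →
      v.1 ⟨m+1, by omega⟩ ≠ s.1 ⟨m+1, by omega⟩ ∧ v.1 ⟨m+1, by omega⟩ ≠ s.1 ⟨m, by omega⟩ := by
    intro v hsh
    constructor
    · have e1 : v.1 ⟨m, by omega⟩ = s.1 ⟨m+1, by omega⟩ :=
        hsh ⟨m, by omega⟩ (show m + 1 < m + 2 by omega)
      have e2 := constrained_last_ne v.2
      exact fun h => e2 (h.trans e1.symm)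
    · have e1 : v.1 ⟨m-1, by omega⟩ = s.1 ⟨m, by omega⟩ := by
        exact (hsh ⟨m-1, by omega⟩ (show (m-1) + 1 < m + 2 by omega)).trans
          (congrArg s.1 (Fin.mk_eq_mk.mpr (show m - 1 + 1 = m by omega)))
      have e2 := constrained_last_ne2 v.2 (by omega : 1 ≤ m)
      exact fun h => e2 (h.trans e1.symm)
  have hinj : Set.InjOn (fun v : dbVtx d 3 (m+2) =>
      if h : dbShift s v ∧ ¬ s = v then
        (some ⟨v.1 ⟨m+1, by omega⟩, (key v h.1).1, (key v h.1).2⟩ :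
          Option {a : Fin d // a ≠ s.1 ⟨m+1, by omega⟩ ∧ a ≠ s.1 ⟨m, by omega⟩})
      else none)
      ↑(Finset.univ.filter (fun v : dbVtx d 3 (m+2) => s = v ∨ dbShift s v)) := by
    intro v hv w hw heq
    simp only [Finset.coe_filter, Set.mem_setOf_eq, Finset.mem_univ, true_and] at hv hw
    simp only [] at heq
    by_cases h1 : s = v
    · by_cases h2 : s = w
      · rw [← h1, ← h2]
      · exfalso
        rw [dif_neg (fun hc => hc.2 h1), dif_pos ⟨hw.resolve_left h2, h2⟩] at heq
        simp at heq
    · have hsv : dbShift s v := hv.resolve_left h1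
      by_cases h2 : s = w
      · exfalso
        rw [dif_pos ⟨hsv, h1⟩, dif_neg (fun hc => hc.2 h2)] at heq
        simp at heq
      · have hsw : dbShift s w := hw.resolve_left h2
        rw [dif_pos ⟨hsv, h1⟩, dif_pos ⟨hsw, h2⟩] at heq
        have hlast : v.1 ⟨m+1, by omega⟩ = w.1 ⟨m+1, by omega⟩ :=
          congrArg Subtype.val (Option.some.inj heq)
        apply Subtype.ext
        funext i
        by_cases hi : i.val < m+1
        · rw [hsv i (by omega), hsw i (by omega)]
        · have hieq : i = ⟨m+1, by omega⟩ := by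
            ext; have := i.isLt; simp; omega
          rw [hieq]
          exact hlast
  have hle := Finset.card_le_card_of_injOn _ (fun v _ => Finset.mem_univ _) hinj
  calc (Finset.univ.filter (fun v : dbVtx d 3 (m+2) => s = v ∨ dbShift s v)).card
      ≤ (Finset.univ : Finset (Option {a : Fin d // a ≠ s.1 ⟨m+1, by omega⟩ ∧ a ≠ s.1 ⟨m, by omega⟩})).card := hle
    _ = d - 1 := by
        rw [Finset.card_univ, Fintype.card_option, ← Nat.card_eq_fintype_card,
          card_ne_pair _ _ hu]
        omega
open Classical in
/-- for `d` even, `γ(cDB⁺(d,3,n)) = d * (d-2)^(n-2)`. -/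
theorem gammaDir_three_even (d n : ℕ) (hd : 3 ≤ d) (hn : 4 ≤ n) (hev : Even d) :
    gammaDir d 3 n = d * (d - 2) ^ (n - 2) := by
  obtain ⟨m, rfl⟩ : ∃ m, n = m + 2 := ⟨n - 2, by omega⟩
  have hm : 2 ≤ m := by omega
  have hd2 : d % 2 = 0 := Nat.even_iff.mp hev
  -- the dominating set
  have hS_ncard : ({v : dbVtx d 3 (m+2) | v.1 1 = dbSig (v.1 0)} : Set _).ncard
      = d * (d-2)^m := by
    rw [← Nat.card_coe_set_eq]
    have e1 : ↥({v : dbVtx d 3 (m+2) | v.1 1 = dbSig (v.1 0)} : Set _)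
        ≃ {x : Fin (m+2) → Fin d // dbConstrained d 3 (m+2) x ∧ x 1 = dbSig (x 0)} :=
      (Equiv.subtypeEquivRight (fun v : dbVtx d 3 (m+2) => Iff.rfl)).trans
        (Equiv.subtypeSubtypeEquivSubtypeInter
          (fun x : Fin (m+2) → Fin d => dbConstrained d 3 (m+2) x)
          (fun x : Fin (m+2) → Fin d => x 1 = dbSig (x 0)))
    rw [Nat.card_congr e1, card_S hd hd2]
  have hmem : d * (d-2)^m ∈ {k | ∃ S : Set (dbVtx d 3 (m+2)),
      S.Finite ∧ S.ncard = k ∧ dbDirDominating S} :=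
    ⟨{v : dbVtx d 3 (m+2) | v.1 1 = dbSig (v.1 0)}, Set.toFinite _, hS_ncard, dom_S hd2⟩
  have hlb : ∀ k ∈ {k | ∃ S : Set (dbVtx d 3 (m+2)),
      S.Finite ∧ S.ncard = k ∧ dbDirDominating S}, d * (d-2)^m ≤ k := by
    rintro k ⟨S', hfin, rfl, hdom⟩
    have hFcard : S'.ncard = hfin.toFinset.card := Set.ncard_eq_toFinset_card S' hfin
    have hcover : (Finset.univ : Finset (dbVtx d 3 (m+2)))
        ⊆ hfin.toFinset.biUnion
          (fun s => Finset.univ.filter (fun v => s = v ∨ dbShift s v)) := by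
      intro v _
      obtain ⟨s, hsS, hsd⟩ := hdom v
      exact Finset.mem_biUnion.mpr ⟨s, hfin.mem_toFinset.mpr hsS,
        Finset.mem_filter.mpr ⟨Finset.mem_univ _, hsd⟩⟩
    have h1 : d * (d-1) * (d-2)^m ≤ S'.ncard * (d-1) := by
      calc d * (d-1) * (d-2)^m = Nat.card (dbVtx d 3 (m+2)) := (card_V hd).symm
        _ = (Finset.univ : Finset (dbVtx d 3 (m+2))).card := by
            rw [Nat.card_eq_fintype_card, Finset.card_univ]
        _ ≤ (hfin.toFinset.biUnion
              (fun s => Finset.univ.filter (fun v => s = v ∨ dbShift s v))).card :=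
            Finset.card_le_card hcover
        _ ≤ ∑ s ∈ hfin.toFinset,
              (Finset.univ.filter (fun v => s = v ∨ dbShift s v)).card :=
            Finset.card_biUnion_le
        _ ≤ ∑ _s ∈ hfin.toFinset, (d-1) :=
            Finset.sum_le_sum (fun s _ => nbhd_card hd hm s)
        _ = hfin.toFinset.card * (d-1) := by rw [Finset.sum_const, smul_eq_mul]
        _ = S'.ncard * (d-1) := by rw [hFcard]
    have h2 : (d-1) * (d * (d-2)^m) ≤ (d-1) * S'.ncard := by
      calc (d-1) * (d * (d-2)^m) = d * (d-1) * (d-2)^m := by ring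
        _ ≤ S'.ncard * (d-1) := h1
        _ = (d-1) * S'.ncard := Nat.mul_comm _ _
    exact Nat.le_of_mul_le_mul_left h2 (by omega)
  show sInf {k | ∃ S : Set (dbVtx d 3 (m+2)),
      S.Finite ∧ S.ncard = k ∧ dbDirDominating S} = d * (d-2)^(m+2-2)
  have hm2 : m + 2 - 2 = m := by omega
  rw [hm2]
  exact le_antisymm (Nat.sInf_le hmem) (le_csInf ⟨_, hmem⟩ hlb)
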